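/- Let G be a finite simple graph that is C_3-free, C_5-free and C_6-free, and let R be a minimal redundant set of G. Then R contains at most 3 redundant vertices, i.e., |red(R)| ≤ 3. -/

import Mathlib

open Set SimpleGraph

variable {V : Type*}

/-- The closed neighborhood `N[v]` of a vertex. -/
def closedNbr (G : SimpleGraph V) (v : V) : Set V := insert v (G.neighborSet v)

/-- Private neighbors of `x` with respect to `I`. -/
def privSet (G : SimpleGraph V) (x : V) (I : Set V) : Set V :=
  {y ∈ closedNbr G x | closedNbr G y ∩ I = {x}}

/-- A set is irredundant if every element has a private neighbor. -/
def Irred (G : SimpleGraph V) (I : Set V) : Prop := ∀ x ∈ I, (privSet G x I).Nonempty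

/-- A maximal irredundant set. -/
def MaxIrred (G : SimpleGraph V) (I : Set V) : Prop :=
  Irred G I ∧ ∀ J : Set V, Irred G J → I ⊆ J → J = I

def Redundant (G : SimpleGraph V) (R : Set V) : Prop := ¬ Irred G R

def MinRedundant (G : SimpleGraph V) (R : Set V) : Prop :=
  Redundant G R ∧ ∀ S : Set V, S ⊂ R → ¬ Redundant G S

/-- The set of redundant vertices of a set. -/
def redVerts (G : SimpleGraph V) (R : Set V) : Set V := {x ∈ R | privSet G x R = ∅}

def Dominating (G : SimpleGraph V) (D : Set V) : Prop := ∀ v : V, ∃ d ∈ D, v ∈ closedNbr G d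

def MinDominating (G : SimpleGraph V) (D : Set V) : Prop :=
  Dominating G D ∧ ∀ S : Set V, S ⊂ D → ¬ Dominating G S

/-- Vertices at distance at most 2 from `x`. -/
def ball2 (G : SimpleGraph V) (x : V) : Set V :=
  {y | y = x ∨ G.Adj x y ∨ ∃ w, G.Adj x w ∧ G.Adj w y}

/-- Vertices at distance exactly 2 from `x`. -/
def sphere2 (G : SimpleGraph V) (x : V) : Set V :=
  {y | y ≠ x ∧ ¬ G.Adj x y ∧ ∃ w, G.Adj x w ∧ G.Adj w y}

/-- `G` contains no induced cycle of length `k`. -/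
def CFree (G : SimpleGraph V) (k : ℕ) : Prop :=
  IsEmpty (SimpleGraph.cycleGraph k ↪g G)

/-- `S` dominates `B` through open neighborhoods. -/
def DomOver (G : SimpleGraph V) (S B : Set V) : Prop := ∀ b ∈ B, ∃ s ∈ S, G.Adj s b

def MinDomOver (G : SimpleGraph V) (S B : Set V) : Prop :=
  DomOver G S B ∧ ∀ S' : Set V, S' ⊂ S → ¬ DomOver G S' B

/-- `N(Y)`, the union of open neighborhoods of elements of `Y`. -/
def nbrUnion (G : SimpleGraph V) (Y : Set V) : Set V := ⋃ y ∈ Y, G.neighborSet y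

/-- Private edges of `x` with respect to `I` in a hypergraph. -/
def hypPriv (H : Set (Set V)) (x : V) (I : Set V) : Set (Set V) := {E ∈ H | E ∩ I = {x}}

def HypIrred (H : Set (Set V)) (I : Set V) : Prop := ∀ x ∈ I, (hypPriv H x I).Nonempty

def HypMaxIrred (H : Set (Set V)) (I : Set V) : Prop :=
  HypIrred H I ∧ ∀ J : Set V, HypIrred H J → I ⊆ J → J = I

/-- The trace of a hypergraph on a set `S`. -/
def htrace (H : Set (Set V)) (S : Set V) : Set (Set V) :=
  {F | ∃ E ∈ H, F = E ∩ S ∧ (E ∩ S).Nonempty}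

/-- The closed-neighborhood hypergraph of a graph. -/
def nbrHyp (G : SimpleGraph V) : Set (Set V) := Set.range (closedNbr G)

/-- The first `i` vertices in the ordering `v` (zero-based: `v 0, …, v (i-1)`). -/
def firstVerts (v : ℕ → V) (i : ℕ) : Set V := {x | ∃ j < i, v j = x}

/-- The incidence co-bipartite graph of the closed-neighborhood hypergraph of `G`:
`Sum.inl` is the vertex side `V`, `Sum.inr` is the copy `U`. -/
def cobip (G : SimpleGraph V) : SimpleGraph (V ⊕ V) :=
  SimpleGraph.fromRel (fun a b => match a, b with
    | Sum.inl _, Sum.inl _ => True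
    | Sum.inr _, Sum.inr _ => True
    | Sum.inl a, Sum.inr b => a = b ∨ G.Adj a b
    | Sum.inr _, Sum.inl _ => False)

lemma mem_closedNbr {G : SimpleGraph V} {v x : V} :
    x ∈ closedNbr G v ↔ x = v ∨ G.Adj v x := by
  simp [closedNbr]

lemma triFree (G : SimpleGraph V) (h3 : CFree G 3) {a b c : V}
    (hab : G.Adj a b) (hbc : G.Adj b c) (hac : G.Adj a c) : False := by
  apply h3.false
  refine ⟨⟨![a,b,c], ?_⟩, ?_⟩
  · intro i j hij
    fin_cases i <;> fin_cases j <;> simp_all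
  · intro i j
    change G.Adj (![a,b,c] i) (![a,b,c] j) ↔ _
    fin_cases i <;> fin_cases j <;>
      simp [cycleGraph_adj, hab, hbc, hac, hab.symm, hbc.symm, hac.symm, G.irrefl] <;> decide

lemma c5Free (G : SimpleGraph V) (h5 : CFree G 5) {a b c d e : V}
    (hab : G.Adj a b) (hbc : G.Adj b c) (hcd : G.Adj c d) (hde : G.Adj d e)
    (hea : G.Adj e a)
    (hac : ¬ G.Adj a c) (had : ¬ G.Adj a d) (hbd : ¬ G.Adj b d)
    (hbe : ¬ G.Adj b e) (hce : ¬ G.Adj c e)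
    (nac : a ≠ c) (nad : a ≠ d) (nbd : b ≠ d) (nbe : b ≠ e) (nce : c ≠ e) : False := by
  have v0 : (![a,b,c,d,e] : Fin 5 → V) 0 = a := rfl
  have v1 : (![a,b,c,d,e] : Fin 5 → V) 1 = b := rfl
  have v2 : (![a,b,c,d,e] : Fin 5 → V) 2 = c := rfl
  have v3 : (![a,b,c,d,e] : Fin 5 → V) 3 = d := rfl
  have v4 : (![a,b,c,d,e] : Fin 5 → V) 4 = e := rfl
  have hba : G.Adj b a := hab.symm
  have hcb : G.Adj c b := hbc.symm
  have hdc : G.Adj d c := hcd.symm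
  have hed : G.Adj e d := hde.symm
  have hae : G.Adj a e := hea.symm
  have hca : ¬ G.Adj c a := fun h => hac h.symm
  have hda : ¬ G.Adj d a := fun h => had h.symm
  have hdb : ¬ G.Adj d b := fun h => hbd h.symm
  have heb : ¬ G.Adj e b := fun h => hbe h.symm
  have hec : ¬ G.Adj e c := fun h => hce h.symm
  have haa : ¬ G.Adj a a := G.loopless.irrefl a
  have hbb : ¬ G.Adj b b := G.loopless.irrefl b
  have hcc : ¬ G.Adj c c := G.loopless.irrefl c
  have hdd : ¬ G.Adj d d := G.loopless.irrefl d
  have hee : ¬ G.Adj e e := G.loopless.irrefl e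
  apply h5.false
  refine ⟨⟨![a,b,c,d,e], ?_⟩, ?_⟩
  · intro i j hij
    fin_cases i <;> fin_cases j <;> simp_all [hab.ne, hbc.ne, hcd.ne, hde.ne, hea.ne,
      hab.ne', hbc.ne', hcd.ne', hde.ne', hea.ne', nac, nad, nbd, nbe, nce,
      nac.symm, nad.symm, nbd.symm, nbe.symm, nce.symm, v0, v1, v2, v3, v4]
  · intro i j
    change G.Adj (![a,b,c,d,e] i) (![a,b,c,d,e] j) ↔ _
    fin_cases i <;> fin_cases j <;>
      simp_all [cycleGraph_adj, v0, v1, v2, v3, v4] <;> decide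

lemma c6Free (G : SimpleGraph V) (h6 : CFree G 6) {a b c d e f : V}
    (hab : G.Adj a b) (hbc : G.Adj b c) (hcd : G.Adj c d) (hde : G.Adj d e)
    (hef : G.Adj e f) (hfa : G.Adj f a)
    (hac : ¬ G.Adj a c) (had : ¬ G.Adj a d) (hae : ¬ G.Adj a e)
    (hbd : ¬ G.Adj b d) (hbe : ¬ G.Adj b e) (hbf : ¬ G.Adj b f)
    (hce : ¬ G.Adj c e) (hcf : ¬ G.Adj c f) (hdf : ¬ G.Adj d f)
    (nac : a ≠ c) (nad : a ≠ d) (nae : a ≠ e) (nbd : b ≠ d) (nbe : b ≠ e)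
    (nbf : b ≠ f) (nce : c ≠ e) (ncf : c ≠ f) (ndf : d ≠ f) : False := by
  have v0 : (![a,b,c,d,e,f] : Fin 6 → V) 0 = a := rfl
  have v1 : (![a,b,c,d,e,f] : Fin 6 → V) 1 = b := rfl
  have v2 : (![a,b,c,d,e,f] : Fin 6 → V) 2 = c := rfl
  have v3 : (![a,b,c,d,e,f] : Fin 6 → V) 3 = d := rfl
  have v4 : (![a,b,c,d,e,f] : Fin 6 → V) 4 = e := rfl
  have v5 : (![a,b,c,d,e,f] : Fin 6 → V) 5 = f := rfl
  have hba : G.Adj b a := hab.symm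
  have hcb : G.Adj c b := hbc.symm
  have hdc : G.Adj d c := hcd.symm
  have hed : G.Adj e d := hde.symm
  have hfe : G.Adj f e := hef.symm
  have haf : G.Adj a f := hfa.symm
  have hca : ¬ G.Adj c a := fun h => hac h.symm
  have hda : ¬ G.Adj d a := fun h => had h.symm
  have hea : ¬ G.Adj e a := fun h => hae h.symm
  have hdb : ¬ G.Adj d b := fun h => hbd h.symm
  have heb : ¬ G.Adj e b := fun h => hbe h.symm
  have hfb : ¬ G.Adj f b := fun h => hbf h.symm
  have hec : ¬ G.Adj e c := fun h => hce h.symm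
  have hfc : ¬ G.Adj f c := fun h => hcf h.symm
  have hfd : ¬ G.Adj f d := fun h => hdf h.symm
  have haa : ¬ G.Adj a a := G.loopless.irrefl a
  have hbb : ¬ G.Adj b b := G.loopless.irrefl b
  have hcc : ¬ G.Adj c c := G.loopless.irrefl c
  have hdd : ¬ G.Adj d d := G.loopless.irrefl d
  have hee : ¬ G.Adj e e := G.loopless.irrefl e
  have hff : ¬ G.Adj f f := G.loopless.irrefl f
  apply h6.false
  refine ⟨⟨![a,b,c,d,e,f], ?_⟩, ?_⟩
  · intro i j hij
    fin_cases i <;> fin_cases j <;> simp_all [hab.ne, hbc.ne, hcd.ne, hde.ne, hef.ne,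
      hfa.ne, hab.ne', hbc.ne', hcd.ne', hde.ne', hef.ne', hfa.ne',
      nac, nad, nae, nbd, nbe, nbf, nce, ncf, ndf,
      nac.symm, nad.symm, nae.symm, nbd.symm, nbe.symm, nbf.symm, nce.symm,
      ncf.symm, ndf.symm, v0, v1, v2, v3, v4, v5]
  · intro i j
    change G.Adj (![a,b,c,d,e,f] i) (![a,b,c,d,e,f] j) ↔ _
    fin_cases i <;> fin_cases j <;>
      simp_all [cycleGraph_adj, v0, v1, v2, v3, v4, v5] <;> decide

lemma pair_mem {G : SimpleGraph V} {R : Set V} {p x y w : V}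
    (hp : closedNbr G p ∩ R = {x, y}) (hw : w ∈ R) (h : w = p ∨ G.Adj p w) :
    w = x ∨ w = y := by
  have hm : w ∈ closedNbr G p := mem_closedNbr.mpr h
  have : w ∈ ({x, y} : Set V) := hp ▸ (⟨hm, hw⟩ : w ∈ closedNbr G p ∩ R)
  simpa using this

/-- Key lemma: if `x` is a redundant vertex of a minimal redundant set `R` and `y ∈ R`
is different from `x`, then there is `p ∈ N[x]` with `N[p] ∩ R = {x, y}`. -/
lemma key {G : SimpleGraph V} {R : Set V} (hR : MinRedundant G R) {x y : V}
    (hx : x ∈ redVerts G R) (hy : y ∈ R) (hxy : x ≠ y) :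
    ∃ p, p ∈ closedNbr G x ∧ closedNbr G p ∩ R = {x, y} := by
  obtain ⟨hxR, hxpriv⟩ := hx
  have hsub : R \ {y} ⊂ R := Set.sdiff_singleton_ssubset.mpr hy
  have hirr : Irred G (R \ {y}) := not_not.mp (hR.2 _ hsub)
  obtain ⟨p, hp1, hp2⟩ := hirr x ⟨hxR, fun h => hxy (by simpa using h)⟩
  have hxp : x ∈ closedNbr G p := by
    have : x ∈ closedNbr G p ∩ (R \ {y}) := by rw [hp2]; rfl
    exact this.1
  have hyp : y ∈ closedNbr G p := by
    by_contra hyc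
    have heq : closedNbr G p ∩ R = {x} := by
      ext z
      constructor
      · rintro ⟨hz1, hz2⟩
        rcases eq_or_ne z y with rfl | hzy
        · exact absurd hz1 hyc
        · have : z ∈ closedNbr G p ∩ (R \ {y}) := ⟨hz1, hz2, hzy⟩
          rw [hp2] at this; exact this
      · rintro rfl; exact ⟨hxp, hxR⟩
    have hmem : p ∈ privSet G x R := ⟨hp1, heq⟩
    rw [hxpriv] at hmem
    exact hmem
  refine ⟨p, hp1, ?_⟩
  ext z
  constructor
  · rintro ⟨hz1, hz2⟩
    rcases eq_or_ne z y with rfl | hzy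
    · exact Or.inr rfl
    · have : z ∈ closedNbr G p ∩ (R \ {y}) := ⟨hz1, hz2, hzy⟩
      rw [hp2] at this
      exact Or.inl this
  · rintro (rfl | rfl)
    · exact ⟨hxp, hxR⟩
    · exact ⟨hyp, hy⟩

/-- Version of `key` for a non-adjacent pair: the witness is a common neighbor. -/
lemma keyN {G : SimpleGraph V} {R : Set V} (hR : MinRedundant G R) {x y : V}
    (hx : x ∈ redVerts G R) (hy : y ∈ R) (hxy : x ≠ y) (hn : ¬ G.Adj x y) :
    ∃ p, G.Adj x p ∧ G.Adj y p ∧ closedNbr G p ∩ R = {x, y} := by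
  obtain ⟨p, hp1, hp2⟩ := key hR hx hy hxy
  rcases mem_closedNbr.mp hp1 with rfl | hxp
  · exfalso
    have : y ∈ closedNbr G p ∩ R := by rw [hp2]; exact Or.inr rfl
    rcases mem_closedNbr.mp this.1 with h | h
    · exact hxy h.symm
    · exact hn h
  · have : y ∈ closedNbr G p ∩ R := by rw [hp2]; exact Or.inr rfl
    rcases mem_closedNbr.mp this.1 with rfl | hyp
    · exact absurd hxp hn
    · exact ⟨p, hxp, hyp.symm, hp2⟩

/-- No independent triple among redundant vertices (uses C₃- and C₆-freeness). -/
lemma NIT {G : SimpleGraph V} {R : Set V} (h3 : CFree G 3) (h6 : CFree G 6)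
    (hR : MinRedundant G R) {x1 x2 x3 : V}
    (h1 : x1 ∈ redVerts G R) (h2 : x2 ∈ redVerts G R) (h3' : x3 ∈ redVerts G R)
    (d12 : x1 ≠ x2) (d13 : x1 ≠ x3) (d23 : x2 ≠ x3)
    (n12 : ¬ G.Adj x1 x2) (n13 : ¬ G.Adj x1 x3) (n23 : ¬ G.Adj x2 x3) : False := by
  obtain ⟨p12, a12, b12, s12⟩ := keyN hR h1 h2.1 d12 n12
  obtain ⟨p13, a13, b13, s13⟩ := keyN hR h1 h3'.1 d13 n13
  obtain ⟨p23, a23, b23, s23⟩ := keyN hR h2 h3'.1 d23 n23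
  -- cycle x2, p12, x1, p13, x3, p23
  refine c6Free G h6 (a := x2) (b := p12) (c := x1) (d := p13) (e := x3) (f := p23)
    b12 a12.symm a13 b13.symm b23 a23.symm ?_ ?_ ?_ ?_ ?_ ?_ ?_ ?_ ?_ ?_ ?_ ?_ ?_ ?_ ?_ ?_ ?_ ?_
  · exact fun h => n12 h.symm
  · intro h
    rcases pair_mem s13 h2.1 (Or.inr h.symm) with h' | h'
    · exact d12 h'.symm
    · exact d23 h'
  · exact fun h => n23 h
  · exact fun h => triFree G h3 a12 h a13
  · intro h
    rcases pair_mem s12 h3'.1 (Or.inr h) with h' | h'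
    · exact d13 h'.symm
    · exact d23 h'.symm
  · exact fun h => triFree G h3 b12 h a23
  · exact fun h => n13 h
  · intro h
    rcases pair_mem s23 h1.1 (Or.inr h.symm) with h' | h'
    · exact d12 h'
    · exact d13 h'
  · exact fun h => triFree G h3 b13 h b23
  · exact fun h => d12 h.symm
  · intro h
    rcases pair_mem s13 h2.1 (Or.inl h) with h' | h'
    · exact d12 h'.symm
    · exact d23 h'
  · exact d23
  · intro h
    subst h
    rcases pair_mem s13 h2.1 (Or.inr b12.symm) with h' | h'
    · exact d12 h'.symm
    · exact d23 h'
  · intro h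
    rcases pair_mem s12 h3'.1 (Or.inl h.symm) with h' | h'
    · exact d13 h'.symm
    · exact d23 h'.symm
  · intro h
    subst h
    rcases pair_mem s23 h1.1 (Or.inr a12.symm) with h' | h'
    · exact d12 h'
    · exact d13 h'
  · exact d13
  · intro h
    rcases pair_mem s23 h1.1 (Or.inl h) with h' | h'
    · exact d12 h'
    · exact d13 h'
  · intro h
    subst h
    rcases pair_mem s23 h1.1 (Or.inr a13.symm) with h' | h'
    · exact d12 h'
    · exact d13 h'

/-- No redundant vertex is non-adjacent to both endpoints of an edge of `R`
(uses C₃- and C₅-freeness). -/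
lemma NP {G : SimpleGraph V} {R : Set V} (h3 : CFree G 3) (h5 : CFree G 5)
    (hR : MinRedundant G R) {x y z : V}
    (hx : x ∈ redVerts G R) (hy : y ∈ R) (hz : z ∈ R) (hyz : G.Adj y z)
    (hxy : x ≠ y) (hxz : x ≠ z) (nxy : ¬ G.Adj x y) (nxz : ¬ G.Adj x z) : False := by
  obtain ⟨p1, a1, b1, s1⟩ := keyN hR hx hy hxy nxy
  obtain ⟨p2, a2, b2, s2⟩ := keyN hR hx hz hxz nxz
  -- cycle p1, x, p2, z, y
  refine c5Free G h5 (a := p1) (b := x) (c := p2) (d := z) (e := y)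
    a1.symm a2 b2.symm hyz.symm b1 ?_ ?_ ?_ ?_ ?_ ?_ ?_ ?_ ?_ ?_
  · exact fun h => triFree G h3 a1 h a2
  · intro h
    rcases pair_mem s1 hz (Or.inr h) with h' | h'
    · exact hxz h'.symm
    · exact hyz.ne h'.symm
  · exact nxz
  · exact nxy
  · intro h
    rcases pair_mem s2 hy (Or.inr h) with h' | h'
    · exact hxy h'.symm
    · exact hyz.ne h'
  · intro h
    subst h
    rcases pair_mem s2 hy (Or.inr b1.symm) with h' | h'
    · exact hxy h'.symm
    · exact hyz.ne h'
  · intro h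
    rcases pair_mem s1 hz (Or.inl h.symm) with h' | h'
    · exact hxz h'.symm
    · exact hyz.ne h'.symm
  · exact hxz
  · exact hxy
  · intro h
    rcases pair_mem s2 hy (Or.inl h.symm) with h' | h'
    · exact hxy h'.symm
    · exact hyz.ne h'

/-- Edge lemma: for an edge `xy` with `x` redundant, `N[x] ∩ R = {x,y}` or
`N[y] ∩ R = {x,y}`. -/
lemma EL {G : SimpleGraph V} {R : Set V} (h3 : CFree G 3) (hR : MinRedundant G R)
    {x y : V} (hx : x ∈ redVerts G R) (hy : y ∈ R) (hadj : G.Adj x y) :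
    closedNbr G x ∩ R = {x, y} ∨ closedNbr G y ∩ R = {x, y} := by
  obtain ⟨p, hp1, hp2⟩ := key hR hx hy hadj.ne
  rcases mem_closedNbr.mp hp1 with rfl | hxp
  · exact Or.inl hp2
  · have : y ∈ closedNbr G p ∩ R := by rw [hp2]; exact Or.inr rfl
    rcases mem_closedNbr.mp this.1 with rfl | hpy
    · exact Or.inr hp2
    · exact absurd hpy (fun h => triFree G h3 hadj h.symm hxp)

/-- Degree bound: a redundant vertex cannot have two neighbors among four distinct
redundant vertices. -/
lemma DL {G : SimpleGraph V} {R : Set V} (h3 : CFree G 3) (h5 : CFree G 5)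
    (h6 : CFree G 6) (hR : MinRedundant G R) {x y z w : V}
    (hx : x ∈ redVerts G R) (hy : y ∈ redVerts G R) (hz : z ∈ redVerts G R)
    (hw : w ∈ redVerts G R)
    (dxy : x ≠ y) (dxz : x ≠ z) (dxw : x ≠ w) (dyz : y ≠ z) (dyw : y ≠ w) (dzw : z ≠ w)
    (hxy : G.Adj x y) (hxz : G.Adj x z) : False := by
  have hNy : closedNbr G y ∩ R = {x, y} := by
    rcases EL h3 hR hx hy.1 hxy with h | h
    · exfalso
      rcases pair_mem h hz.1 (Or.inr hxz) with h' | h'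
      · exact dxz h'.symm
      · exact dyz h'.symm
    · exact h
  have hwy : ¬ G.Adj w y := by
    intro h
    rcases pair_mem hNy hw.1 (Or.inr h.symm) with h' | h'
    · exact dxw h'.symm
    · exact dyw h'.symm
  have hwx : G.Adj w x := by
    by_contra hc
    exact NP h3 h5 hR hw hx.1 hy.1 hxy (Ne.symm dxw) (Ne.symm dyw)
      (fun h => hc h) hwy
  have nyz : ¬ G.Adj y z := fun h => triFree G h3 hxy h hxz
  have nyw : ¬ G.Adj y w := fun h => hwy h.symm
  have nzw : ¬ G.Adj z w := fun h => triFree G h3 hxz h hwx.symm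
  exact NIT h3 h6 hR hy hz hw dyz dyw dzw nyz nyw nzw

/-- No edge among four distinct redundant vertices. -/
lemma edge_kill {G : SimpleGraph V} {R : Set V} (h3 : CFree G 3) (h5 : CFree G 5)
    (h6 : CFree G 6) (hR : MinRedundant G R) {x y z w : V}
    (hx : x ∈ redVerts G R) (hy : y ∈ redVerts G R) (hz : z ∈ redVerts G R)
    (hw : w ∈ redVerts G R)
    (dxy : x ≠ y) (dxz : x ≠ z) (dxw : x ≠ w) (dyz : y ≠ z) (dyw : y ≠ w) (dzw : z ≠ w)
    (hxy : G.Adj x y) : False := by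
  have nxz : ¬ G.Adj x z := fun h =>
    DL h3 h5 h6 hR hx hy hz hw dxy dxz dxw dyz dyw dzw hxy h
  have nxw : ¬ G.Adj x w := fun h =>
    DL h3 h5 h6 hR hx hy hw hz dxy dxw dxz dyw dyz (Ne.symm dzw) hxy h
  have nyz : ¬ G.Adj y z := fun h =>
    DL h3 h5 h6 hR hy hx hz hw (Ne.symm dxy) dyz dyw dxz dxw dzw hxy.symm h
  exact NP h3 h5 hR hz hx.1 hy.1 hxy (Ne.symm dxz) (Ne.symm dyz)
    (fun h => nxz h.symm) (fun h => nyz h.symm)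

/-- in a `(C₃, C₅, C₆)`-free graph, a minimal redundant set contains at
most 3 redundant vertices. -/
theorem stmt12 [Fintype V] (G : SimpleGraph V) (h3 : CFree G 3) (h5 : CFree G 5)
    (h6 : CFree G 6) (R : Set V) (hR : MinRedundant G R) :
    (redVerts G R).ncard ≤ 3 := by
  by_contra hcon
  push_neg at hcon
  set S := redVerts G R with hS
  have hfin : S.Finite := Set.toFinite _
  have h1 : S.Nonempty := Set.nonempty_of_ncard_ne_zero (by omega)
  obtain ⟨a, ha⟩ := h1
  have c1 : (S \ {a}).ncard = S.ncard - 1 := Set.ncard_diff_singleton_of_mem ha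
  have h2 : (S \ {a}).Nonempty := Set.nonempty_of_ncard_ne_zero (by omega)
  obtain ⟨b, hb⟩ := h2
  have c2 : ((S \ {a}) \ {b}).ncard = (S \ {a}).ncard - 1 :=
    Set.ncard_diff_singleton_of_mem hb
  have h3' : ((S \ {a}) \ {b}).Nonempty := Set.nonempty_of_ncard_ne_zero (by omega)
  obtain ⟨c, hc⟩ := h3'
  have c3 : (((S \ {a}) \ {b}) \ {c}).ncard = ((S \ {a}) \ {b}).ncard - 1 :=
    Set.ncard_diff_singleton_of_mem hc
  have h4 : (((S \ {a}) \ {b}) \ {c}).Nonempty := Set.nonempty_of_ncard_ne_zero (by omega)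
  obtain ⟨d, hd⟩ := h4
  have haS : a ∈ S := ha
  have hbS : b ∈ S := hb.1
  have hcS : c ∈ S := hc.1.1
  have hdS : d ∈ S := hd.1.1.1
  have dab : a ≠ b := fun h => hb.2 (by simp [h.symm])
  have dac : a ≠ c := fun h => hc.1.2 (by simp [h.symm])
  have dad : a ≠ d := fun h => hd.1.1.2 (by simp [h.symm])
  have dbc : b ≠ c := fun h => hc.2 (by simp [h.symm])
  have dbd : b ≠ d := fun h => hd.1.2 (by simp [h.symm])
  have dcd : c ≠ d := fun h => hd.2 (by simp [h.symm])
  have nab : ¬ G.Adj a b := fun h =>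
    edge_kill h3 h5 h6 hR haS hbS hcS hdS dab dac dad dbc dbd dcd h
  have nac : ¬ G.Adj a c := fun h =>
    edge_kill h3 h5 h6 hR haS hcS hbS hdS dac dab dad (Ne.symm dbc) dcd dbd h
  have nbc : ¬ G.Adj b c := fun h =>
    edge_kill h3 h5 h6 hR hbS hcS haS hdS dbc (Ne.symm dab) dbd (Ne.symm dac) dcd dad h
  exact NIT h3 h6 hR haS hbS hcS dab dac dbc nab nac nbc
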